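/- In the generalized Monty Hall problem with a random host (N doors, m prizes, host randomly opens k doors among the N-1 unchosen doors, revealing exactly r prizes), the probability of winning by staying equals the probability of winning by switching; both equal (m-r)/(N-k). -/

import Mathlib

open Finset

lemma countA {α : Type*} [Fintype α] [DecidableEq α] (B : Finset α) (m r : ℕ) (hr : r ≤ m) :
    ((univ.powersetCard m : Finset (Finset α)).filter fun A => (A ∩ B).card = r).card
      = B.card.choose r * (Fintype.card α - B.card).choose (m - r) := by
  rw [← Finset.card_powersetCard, ← Finset.card_compl, ← Finset.card_powersetCard,
    ← Finset.card_product]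
  apply Finset.card_bij' (fun A _ => (A ∩ B, A \ B)) (fun p _ => p.1 ∪ p.2)
  · intro A hA
    simp only [mem_filter, mem_powersetCard] at hA
    obtain ⟨⟨_, hAm⟩, hAr⟩ := hA
    have hsd : (A \ B).card + (A ∩ B).card = A.card := card_sdiff_add_card_inter A B
    refine mem_product.mpr ⟨mem_powersetCard.mpr ⟨inter_subset_right, hAr⟩,
      mem_powersetCard.mpr ⟨fun x hx => ?_, ?_⟩⟩
    · simp only [mem_compl]
      exact (mem_sdiff.mp hx).2
    · show (A \ B).card = m - r
      omega
  · intro p hp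
    obtain ⟨hC, hD⟩ := mem_product.mp hp
    obtain ⟨hCB, hCr⟩ := mem_powersetCard.mp hC
    obtain ⟨hDB, hDr⟩ := mem_powersetCard.mp hD
    have hdisj : Disjoint p.1 p.2 := by
      refine disjoint_left.mpr fun x hx1 hx2 => ?_
      exact (mem_compl.mp (hDB hx2)) (hCB hx1)
    have hDBe : p.2 ∩ B = ∅ := by
      refine eq_empty_of_forall_notMem fun x hx => ?_
      exact (mem_compl.mp (hDB (mem_inter.mp hx).1)) (mem_inter.mp hx).2
    simp only [mem_filter, mem_powersetCard]
    refine ⟨⟨subset_univ _, ?_⟩, ?_⟩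
    · rw [card_union_of_disjoint hdisj, hCr, hDr]; omega
    · rw [union_inter_distrib_right, hDBe, union_empty, inter_eq_left.mpr hCB, hCr]
  · intro A hA
    rw [union_comm]
    exact sdiff_union_inter A B
  · intro p hp
    obtain ⟨hC, hD⟩ := mem_product.mp hp
    obtain ⟨hCB, _⟩ := mem_powersetCard.mp hC
    obtain ⟨hDB, _⟩ := mem_powersetCard.mp hD
    have hDBe : p.2 ∩ B = ∅ := by
      refine eq_empty_of_forall_notMem fun x hx => ?_
      exact (mem_compl.mp (hDB (mem_inter.mp hx).1)) (mem_inter.mp hx).2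
    have h1 : (p.1 ∪ p.2) ∩ B = p.1 := by
      rw [union_inter_distrib_right, hDBe, union_empty, inter_eq_left.mpr hCB]
    have h2 : (p.1 ∪ p.2) \ B = p.2 := by
      rw [union_sdiff_distrib, sdiff_eq_empty_iff_subset.mpr hCB, empty_union,
        Finset.sdiff_eq_self_iff_disjoint.mpr]
      exact disjoint_left.mpr fun x hx2 hxB => (mem_compl.mp (hDB hx2)) hxB
    exact Prod.ext h1 h2

lemma countB {α : Type*} [Fintype α] [DecidableEq α] (B : Finset α) (x₀ : α) (hx : x₀ ∉ B)
    (m r : ℕ) (hr : r < m) :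
    ((univ.powersetCard m : Finset (Finset α)).filter
        fun A => (A ∩ B).card = r ∧ x₀ ∈ A).card
      = B.card.choose r * (Fintype.card α - B.card - 1).choose (m - r - 1) := by
  have hxc : x₀ ∈ Bᶜ := mem_compl.mpr hx
  have hce : (Bᶜ.erase x₀).card = Fintype.card α - B.card - 1 := by
    rw [card_erase_of_mem hxc, card_compl]
  rw [← Finset.card_powersetCard r B, ← hce, ← Finset.card_powersetCard,
    ← Finset.card_product]
  apply Finset.card_bij' (fun A _ => (A ∩ B, (A \ B).erase x₀))
    (fun p _ => p.1 ∪ insert x₀ p.2)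
  · intro A hA
    simp only [mem_filter, mem_powersetCard] at hA
    obtain ⟨⟨_, hAm⟩, hAr, hAx⟩ := hA
    have hsd : (A \ B).card + (A ∩ B).card = A.card := card_sdiff_add_card_inter A B
    have hxAB : x₀ ∈ A \ B := mem_sdiff.mpr ⟨hAx, hx⟩
    refine mem_product.mpr ⟨mem_powersetCard.mpr ⟨inter_subset_right, hAr⟩,
      mem_powersetCard.mpr ⟨erase_subset_erase _ fun y hy => mem_compl.mpr (mem_sdiff.mp hy).2, ?_⟩⟩
    rw [card_erase_of_mem hxAB]
    omega
  · intro p hp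
    obtain ⟨hC, hD⟩ := mem_product.mp hp
    obtain ⟨hCB, hCr⟩ := mem_powersetCard.mp hC
    obtain ⟨hDB, hDr⟩ := mem_powersetCard.mp hD
    have hDc : p.2 ⊆ Bᶜ := hDB.trans (erase_subset _ _)
    have hxD : x₀ ∉ p.2 := fun h => (mem_erase.mp (hDB h)).1 rfl
    have hIc : insert x₀ p.2 ⊆ Bᶜ := insert_subset hxc hDc
    have hdisj : Disjoint p.1 (insert x₀ p.2) :=
      disjoint_left.mpr fun y hy1 hy2 => (mem_compl.mp (hIc hy2)) (hCB hy1)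
    have hIe : insert x₀ p.2 ∩ B = ∅ :=
      eq_empty_of_forall_notMem fun y hy =>
        (mem_compl.mp (hIc (mem_inter.mp hy).1)) (mem_inter.mp hy).2
    simp only [mem_filter, mem_powersetCard]
    refine ⟨⟨subset_univ _, ?_⟩, ?_, ?_⟩
    · rw [card_union_of_disjoint hdisj, card_insert_of_notMem hxD, hCr, hDr]; omega
    · rw [union_inter_distrib_right, hIe, union_empty, inter_eq_left.mpr hCB, hCr]
    · exact mem_union_right _ (mem_insert_self _ _)
  · intro A hA
    simp only [mem_filter, mem_powersetCard] at hA
    obtain ⟨⟨_, hAm⟩, hAr, hAx⟩ := hA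
    have hxAB : x₀ ∈ A \ B := mem_sdiff.mpr ⟨hAx, hx⟩
    rw [insert_erase hxAB, union_comm]
    exact sdiff_union_inter A B
  · intro p hp
    obtain ⟨hC, hD⟩ := mem_product.mp hp
    obtain ⟨hCB, hCr⟩ := mem_powersetCard.mp hC
    obtain ⟨hDB, hDr⟩ := mem_powersetCard.mp hD
    have hDc : p.2 ⊆ Bᶜ := hDB.trans (erase_subset _ _)
    have hxD : x₀ ∉ p.2 := fun h => (mem_erase.mp (hDB h)).1 rfl
    have hIc : insert x₀ p.2 ⊆ Bᶜ := insert_subset hxc hDc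
    have hIe : insert x₀ p.2 ∩ B = ∅ :=
      eq_empty_of_forall_notMem fun y hy =>
        (mem_compl.mp (hIc (mem_inter.mp hy).1)) (mem_inter.mp hy).2
    have h1 : (p.1 ∪ insert x₀ p.2) ∩ B = p.1 := by
      rw [union_inter_distrib_right, hIe, union_empty, inter_eq_left.mpr hCB]
    have h2 : ((p.1 ∪ insert x₀ p.2) \ B).erase x₀ = p.2 := by
      rw [union_sdiff_distrib, sdiff_eq_empty_iff_subset.mpr hCB, empty_union,
        Finset.sdiff_eq_self_iff_disjoint.mpr
          (disjoint_left.mpr fun y hy2 hyB => (mem_compl.mp (hIc hy2)) hyB),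
        erase_insert hxD]
    exact Prod.ext h1 h2

theorem stmt_5 (N m k r : ℕ) (hN : 0 < N) (hswitch : 1 ≤ N - k - 1)
    (hE : (((univ.powersetCard m : Finset (Finset (Fin N))) ×ˢ
        ((univ.erase (⟨0, hN⟩ : Fin N)).powersetCard k)).filter
        (fun p => (p.1 ∩ p.2).card = r)).Nonempty) :
    ((((((univ.powersetCard m : Finset (Finset (Fin N))) ×ˢ
          ((univ.erase (⟨0, hN⟩ : Fin N)).powersetCard k)).filter
          (fun p => (p.1 ∩ p.2).card = r)).filter
          (fun p => (⟨0, hN⟩ : Fin N) ∈ p.1)).card : ℚ)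
        / (((((univ.powersetCard m : Finset (Finset (Fin N))) ×ˢ
          ((univ.erase (⟨0, hN⟩ : Fin N)).powersetCard k)).filter
          (fun p => (p.1 ∩ p.2).card = r)).card : ℚ))
      = ((m : ℚ) - r) / ((N : ℚ) - k))
    ∧ ((∑ p ∈ (((univ.powersetCard m : Finset (Finset (Fin N))) ×ˢ
          ((univ.erase (⟨0, hN⟩ : Fin N)).powersetCard k)).filter
          (fun p => (p.1 ∩ p.2).card = r)),
          ((p.1 \ insert (⟨0, hN⟩ : Fin N) p.2).card : ℚ) / ((N : ℚ) - k - 1))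
        / (((((univ.powersetCard m : Finset (Finset (Fin N))) ×ˢ
          ((univ.erase (⟨0, hN⟩ : Fin N)).powersetCard k)).filter
          (fun p => (p.1 ∩ p.2).card = r)).card : ℚ))
      = ((m : ℚ) - r) / ((N : ℚ) - k)) := by
  set d : Fin N := ⟨0, hN⟩ with hd
  set Pm : Finset (Finset (Fin N)) := univ.powersetCard m with hPm
  set Pk : Finset (Finset (Fin N)) := (univ.erase d).powersetCard k with hPk
  set S : Finset (Finset (Fin N) × Finset (Fin N)) :=
    (Pm ×ˢ Pk).filter (fun p => (p.1 ∩ p.2).card = r) with hS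
  set T : Finset (Finset (Fin N) × Finset (Fin N)) :=
    S.filter (fun p => d ∈ p.1) with hT
  -- basic memberships
  have hmemS : ∀ p ∈ S, p.1.card = m ∧ p.2.card = k ∧ p.2 ⊆ univ.erase d ∧
      (p.1 ∩ p.2).card = r := by
    intro p hp
    rw [hS, mem_filter, mem_product, hPm, hPk, mem_powersetCard, mem_powersetCard] at hp
    exact ⟨hp.1.1.2, hp.1.2.2, hp.1.2.1, hp.2⟩
  have hkN2 : k + 2 ≤ N := by omega
  obtain ⟨p₀, hp₀⟩ := hE
  obtain ⟨h1m, h2k, h2e, hir⟩ := hmemS p₀ hp₀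
  have hrm : r ≤ m := by
    have := card_le_card (show p₀.1 ∩ p₀.2 ⊆ p₀.1 from inter_subset_left)
    omega
  have hS0 : S.card ≠ 0 := Finset.card_ne_zero_of_mem hp₀
  have hSQ : (S.card : ℚ) ≠ 0 := Nat.cast_ne_zero.mpr hS0
  have hNkQ : (N : ℚ) - k ≠ 0 := by
    have : (k : ℚ) + 2 ≤ N := by exact_mod_cast hkN2
    linarith
  have hDQ : (N : ℚ) - k - 1 ≠ 0 := by
    have : (k : ℚ) + 2 ≤ N := by exact_mod_cast hkN2
    linarith
  have hdnot : ∀ B ∈ Pk, d ∉ B := by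
    intro B hB hdB
    exact (mem_erase.mp ((mem_powersetCard.mp hB).1 hdB)).1 rfl
  have hBk : ∀ B ∈ Pk, B.card = k := fun B hB => (mem_powersetCard.mp hB).2
  -- cardinality of S
  have hScard : S.card = Pk.card * (k.choose r * (N - k).choose (m - r)) := by
    have h1 : S.card = ∑ B ∈ Pk, (Pm.filter fun A => (A ∩ B).card = r).card := by
      rw [hS, Finset.card_filter, Finset.sum_product_right]
      exact Finset.sum_congr rfl fun B _ => by rw [Finset.card_filter]
    rw [h1, Finset.sum_congr rfl (fun B hB => ?_), Finset.sum_const, smul_eq_mul]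
    have := countA B m r hrm
    rw [hBk B hB, Fintype.card_fin] at this
    exact this
  -- key claim 1
  have h1 : (T.card : ℚ) / (S.card : ℚ) = ((m : ℚ) - r) / ((N : ℚ) - k) := by
    rcases eq_or_lt_of_le hrm with hrm' | hrm'
    · -- r = m : T is empty
      have hTe : T = ∅ := by
        rw [hT, Finset.filter_eq_empty_iff]
        intro p hp
        obtain ⟨h1m', h2k', h2e', hir'⟩ := hmemS p hp
        have hsub : p.1 ⊆ p.2 := by
          have : p.1 ∩ p.2 = p.1 :=
            Finset.eq_of_subset_of_card_le inter_subset_left (by omega)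
          exact inter_eq_left.mp this
        intro hdp
        exact (mem_erase.mp (h2e' (hsub hdp))).1 rfl
      rw [hTe, ← hrm']
      simp
    · -- r < m
      have hTcard : T.card = Pk.card * (k.choose r * (N - k - 1).choose (m - r - 1)) := by
        have h2 : T.card = ∑ B ∈ Pk,
            (Pm.filter fun A => (A ∩ B).card = r ∧ d ∈ A).card := by
          rw [hT, hS, Finset.filter_filter, Finset.card_filter, Finset.sum_product_right]
          exact Finset.sum_congr rfl fun B _ => by rw [Finset.card_filter]
        rw [h2, Finset.sum_congr rfl (fun B hB => ?_), Finset.sum_const, smul_eq_mul]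
        have := countB B d (hdnot B hB) m r hrm'
        rw [hBk B hB, Fintype.card_fin] at this
        exact this
      have hid : (N - k) * (N - k - 1).choose (m - r - 1) = (m - r) * (N - k).choose (m - r) := by
        have := Nat.add_one_mul_choose_eq (N - k - 1) (m - r - 1)
        have e1 : N - k - 1 + 1 = N - k := by omega
        have e2 : m - r - 1 + 1 = m - r := by omega
        rw [e1, e2] at this
        rw [this]; ring
      have hidQ : ((N : ℚ) - k) * ((N - k - 1).choose (m - r - 1) : ℚ)
          = ((m : ℚ) - r) * ((N - k).choose (m - r) : ℚ) := by
        have := congrArg (Nat.cast (R := ℚ)) hid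
        rw [Nat.cast_mul, Nat.cast_mul, Nat.cast_sub (by omega : k ≤ N),
          Nat.cast_sub hrm] at this
        exact this
      rw [div_eq_div_iff hSQ hNkQ, hTcard, hScard]
      push_cast
      linear_combination ((Pk.card : ℚ) * (k.choose r : ℚ)) * hidQ
  -- pointwise formula for switching
  have hpt : ∀ p ∈ S, ((p.1 \ insert d p.2).card : ℚ)
      = ((m : ℚ) - r) - (if d ∈ p.1 then (1 : ℚ) else 0) := by
    intro p hp
    obtain ⟨h1m', h2k', h2e', hir'⟩ := hmemS p hp
    have hdB : d ∉ p.2 := fun h => (mem_erase.mp (h2e' h)).1 rfl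
    have hsd : (p.1 \ p.2).card + (p.1 ∩ p.2).card = p.1.card :=
      card_sdiff_add_card_inter p.1 p.2
    have hcard : (p.1 \ p.2).card = m - r := by omega
    have hmem : d ∈ p.1 \ p.2 ↔ d ∈ p.1 := by simp [mem_sdiff, hdB]
    rw [sdiff_insert, card_erase_eq_ite]
    by_cases hdp : d ∈ p.1
    · rw [if_pos (hmem.mpr hdp), if_pos hdp, hcard]
      have hpos : 1 ≤ m - r := by
        have := card_pos.mpr ⟨d, hmem.mpr hdp⟩
        omega
      rw [Nat.cast_sub hpos, Nat.cast_sub hrm, Nat.cast_one]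
    · rw [if_neg (fun h => hdp (hmem.mp h)), if_neg hdp, hcard, Nat.cast_sub hrm]
      ring
  -- the sum
  have hsum : (∑ p ∈ S, ((p.1 \ insert d p.2).card : ℚ) / ((N : ℚ) - k - 1))
      = ((S.card : ℚ) * ((m : ℚ) - r) - (T.card : ℚ)) / ((N : ℚ) - k - 1) := by
    rw [← Finset.sum_div]
    congr 1
    rw [Finset.sum_congr rfl hpt, Finset.sum_sub_distrib, Finset.sum_const,
      Finset.sum_boole, nsmul_eq_mul, hT]
  constructor
  · exact h1
  · rw [hsum]
    have hT' : (T.card : ℚ) * ((N : ℚ) - k) = ((m : ℚ) - r) * (S.card : ℚ) :=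
      (div_eq_div_iff hSQ hNkQ).mp h1
    rw [div_div, div_eq_div_iff (mul_ne_zero hDQ hSQ) hNkQ]
    linear_combination -hT'
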